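/- arXiv:2103.01788 — 2 statements merged into one kernel-verified Lean document; each statement's English description precedes it below -/
import Mathlib

section
/- Let V be a real inner product space with norm ‖·‖. Suppose χ ∈ V can be written as χ = Σ_{î∈Î} χ_î (finite sum), and suppose there is a family {w_i}_{i∈I} in V and real numbers m_i such that ⟨χ_î, w_i⟩ = 0 for all pairs (î,i) outside a set S, with #{i : (î,i) ∈ S} ≤ C_ol for each î and #{î : (î,i) ∈ S} ≤ C_ol for each i, and ‖χ‖² = Σ_{(î,i)∈S} m_i ⟨χ_î, w_i⟩. If additionally Σ_î ‖χ_î‖² ≤ C ‖χ‖², then ‖χ‖² ≤ 2 C C_ol² Σ_{i∈I} m_i² ‖w_i‖². -/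
open scoped RealInnerProductSpace
open Classical

lemma fiber_sum_le {α β : Type*} [Fintype β] (s : Finset α) (g : α → β) (f : β → ℝ)
    (hf : ∀ b, 0 ≤ f b) (Col : ℕ)
    (h : ∀ b, (s.filter fun a => g a = b).card ≤ Col) :
    ∑ a ∈ s, f (g a) ≤ (Col : ℝ) * ∑ b, f b := by
  rw [← Finset.sum_fiberwise s g (fun a => f (g a)), Finset.mul_sum]
  apply Finset.sum_le_sum
  intro b _
  have : ∑ a ∈ s.filter (fun a => g a = b), f (g a)
      = (s.filter (fun a => g a = b)).card * f b := by
    rw [Finset.sum_congr rfl (fun a ha => by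
      rw [(Finset.mem_filter.1 ha).2]), Finset.sum_const, nsmul_eq_mul]
  rw [this]
  have := h b
  exact mul_le_mul_of_nonneg_right (by exact_mod_cast this) (hf b)

/-- Abstract form of the key estimate in the accuracy proof for localized
bases: if `χ = Σ_ih χ_ih`, the interactions `⟪χ_ih, w_i⟫` vanish outside a sparse
set `S` with row/column counts at most `C_ol`, `‖χ‖² = Σ_{(ih,i)∈S} m_i ⟪χ_ih, w_i⟫`,
and the decomposition is stable, `Σ_ih ‖χ_ih‖² ≤ C ‖χ‖²`, then
`‖χ‖² ≤ 2 C C_ol² Σ_i m_i² ‖w_i‖²`. -/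
theorem stmt_10 {V : Type*} [NormedAddCommGroup V] [InnerProductSpace ℝ V]
    {Ihat I : Type*} [Fintype Ihat] [Fintype I]
    (χ : V) (χhat : Ihat → V) (w : I → V) (m : I → ℝ)
    (S : Finset (Ihat × I)) (Col : ℕ) (C : ℝ) (hC : 0 < C) (hCol : 0 < Col)
    (hdecomp : χ = ∑ ih, χhat ih)
    (horth : ∀ ih i, (ih, i) ∉ S → ⟪χhat ih, w i⟫ = 0)
    (hrow : ∀ ih, (S.filter (fun p => p.1 = ih)).card ≤ Col)
    (hcol : ∀ i, (S.filter (fun p => p.2 = i)).card ≤ Col)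
    (hsum : ‖χ‖ ^ 2 = ∑ p ∈ S, m p.2 * ⟪χhat p.1, w p.2⟫)
    (hstab : ∑ ih, ‖χhat ih‖ ^ 2 ≤ C * ‖χ‖ ^ 2) :
    ‖χ‖ ^ 2 ≤ 2 * C * (Col : ℝ) ^ 2 * ∑ i, m i ^ 2 * ‖w i‖ ^ 2 := by
  set A : ℝ := C * Col with hA
  have hApos : 0 < A := mul_pos hC (by exact_mod_cast hCol)
  have hColpos : (0:ℝ) < Col := by exact_mod_cast hCol
  -- Young's inequality term by term
  have hterm : ∀ p ∈ S, m p.2 * ⟪χhat p.1, w p.2⟫ ≤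
      A⁻¹ / 2 * ‖χhat p.1‖ ^ 2 + A / 2 * (m p.2 ^ 2 * ‖w p.2‖ ^ 2) := by
    intro p _
    have h1 : m p.2 * ⟪χhat p.1, w p.2⟫ ≤ ‖χhat p.1‖ * (|m p.2| * ‖w p.2‖) := by
      calc m p.2 * ⟪χhat p.1, w p.2⟫ ≤ |m p.2 * ⟪χhat p.1, w p.2⟫| := le_abs_self _
        _ = |m p.2| * |⟪χhat p.1, w p.2⟫| := abs_mul _ _
        _ ≤ |m p.2| * (‖χhat p.1‖ * ‖w p.2‖) :=
            mul_le_mul_of_nonneg_left (abs_real_inner_le_norm _ _) (abs_nonneg _)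
        _ = ‖χhat p.1‖ * (|m p.2| * ‖w p.2‖) := by ring
    have h2 : ‖χhat p.1‖ * (|m p.2| * ‖w p.2‖) ≤
        A⁻¹ / 2 * ‖χhat p.1‖ ^ 2 + A / 2 * (m p.2 ^ 2 * ‖w p.2‖ ^ 2) := by
      set a := ‖χhat p.1‖ with ha
      set b := |m p.2| * ‖w p.2‖ with hb
      have hmain := mul_nonneg (inv_nonneg.2 hApos.le) (sq_nonneg (a - A * b))
      have hexp : A⁻¹ * (a - A * b) ^ 2 = A⁻¹ * a ^ 2 - 2 * (a * b) + A * b ^ 2 := by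
        field_simp
        ring
      have hb2 : b ^ 2 = m p.2 ^ 2 * ‖w p.2‖ ^ 2 := by
        rw [hb, mul_pow, sq_abs]
      rw [hexp] at hmain
      rw [← hb2]
      linarith
    linarith
  have hsum1 : ∑ p ∈ S, (‖χhat p.1‖ ^ 2) ≤ (Col : ℝ) * ∑ ih, ‖χhat ih‖ ^ 2 :=
    fiber_sum_le S Prod.fst (fun ih => ‖χhat ih‖ ^ 2) (fun _ => sq_nonneg _) Col hrow
  have hsum2 : ∑ p ∈ S, (m p.2 ^ 2 * ‖w p.2‖ ^ 2) ≤
      (Col : ℝ) * ∑ i, m i ^ 2 * ‖w i‖ ^ 2 :=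
    fiber_sum_le S Prod.snd (fun i => m i ^ 2 * ‖w i‖ ^ 2)
      (fun i => mul_nonneg (sq_nonneg _) (sq_nonneg _)) Col hcol
  have hT : 0 ≤ ∑ i, m i ^ 2 * ‖w i‖ ^ 2 :=
    Finset.sum_nonneg fun i _ => mul_nonneg (sq_nonneg _) (sq_nonneg _)
  have key : ‖χ‖ ^ 2 ≤ A⁻¹ / 2 * (∑ p ∈ S, ‖χhat p.1‖ ^ 2)
      + A / 2 * (∑ p ∈ S, m p.2 ^ 2 * ‖w p.2‖ ^ 2) := by
    rw [hsum, Finset.mul_sum, Finset.mul_sum, ← Finset.sum_add_distrib]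
    exact Finset.sum_le_sum fun p hp => by
      have := hterm p hp; linarith
  have hAinv : A⁻¹ * A = 1 := inv_mul_cancel₀ (ne_of_gt hApos)
  have h3 : A⁻¹ / 2 * (∑ p ∈ S, ‖χhat p.1‖ ^ 2) ≤ A⁻¹ / 2 * ((Col : ℝ) * (C * ‖χ‖ ^ 2)) := by
    apply mul_le_mul_of_nonneg_left _ (by positivity)
    calc ∑ p ∈ S, ‖χhat p.1‖ ^ 2 ≤ (Col : ℝ) * ∑ ih, ‖χhat ih‖ ^ 2 := hsum1
      _ ≤ (Col : ℝ) * (C * ‖χ‖ ^ 2) := mul_le_mul_of_nonneg_left hstab (le_of_lt hColpos)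
  have h4 : A / 2 * (∑ p ∈ S, m p.2 ^ 2 * ‖w p.2‖ ^ 2) ≤
      A / 2 * ((Col : ℝ) * ∑ i, m i ^ 2 * ‖w i‖ ^ 2) :=
    mul_le_mul_of_nonneg_left hsum2 (by positivity)
  have hfin : A⁻¹ / 2 * ((Col : ℝ) * (C * ‖χ‖ ^ 2)) = ‖χ‖ ^ 2 / 2 := by
    field_simp [hA]
    ring
  nlinarith [key, h3, h4, hT, mul_pos hC (mul_pos hColpos hColpos)]
end

section
/- Suppose cond(P) := λ_max(P)/λ_min(P) ≤ C₂' < ∞ and ‖ψ_i⁰‖ ≤ C₁ H^{-1}. Then the localized basis functions satisfy ‖ψ_i − ψ_i^ℓ‖ ≤ C₁ H^{-1} θ^ℓ where θ = (cond(P)−1)/(cond(P)+1) < 1; in particular, writing θ = e^{-1/C₂} for some C₂ > 0 depending only on cond(P), ‖ψ_i − ψ_i^ℓ‖ ≤ C₁ H^{-1} e^{-ℓ/C₂}. -/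
/-- Exponential decay of the localization error (Theorem 3.3): from the
contraction estimate `‖ψ_i - ψ_i^ℓ‖ ≤ θ^ℓ ‖ψ_i⁰‖` with
`θ = (κ-1)/(κ+1) ∈ [0,1)` (`κ = cond(P) > 1`) and `‖ψ_i⁰‖ ≤ C₁ H⁻¹`, one gets
`‖ψ_i - ψ_i^ℓ‖ ≤ C₁ H⁻¹ θ^ℓ = C₁ H⁻¹ e^{-ℓ/C₂}` with `θ = e^{-1/C₂}`. -/
theorem stmt_17 {V : Type*} [NormedAddCommGroup V]
    (ψi : V) (ψloc : ℕ → V) (ψ0 : V) (κ C₁ Hm : ℝ)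
    (hκ : 1 < κ) (hH : 0 < Hm)
    (hcontr : ∀ ℓ : ℕ, ‖ψi - ψloc ℓ‖ ≤ ((κ - 1) / (κ + 1)) ^ ℓ * ‖ψ0‖)
    (hψ0 : ‖ψ0‖ ≤ C₁ * Hm⁻¹) :
    (∀ ℓ : ℕ, ‖ψi - ψloc ℓ‖ ≤ C₁ * Hm⁻¹ * ((κ - 1) / (κ + 1)) ^ ℓ) ∧
    0 ≤ (κ - 1) / (κ + 1) ∧ (κ - 1) / (κ + 1) < 1 ∧
    ∃ C₂ : ℝ, 0 < C₂ ∧ (κ - 1) / (κ + 1) = Real.exp (-(1 / C₂)) ∧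
      ∀ ℓ : ℕ, ‖ψi - ψloc ℓ‖ ≤ C₁ * Hm⁻¹ * Real.exp (-(ℓ : ℝ) / C₂) := by

  have hθpos : 0 < (κ - 1) / (κ + 1) := div_pos (by linarith) (by linarith)
  have hθlt : (κ - 1) / (κ + 1) < 1 := by
    rw [div_lt_one (by linarith)]; linarith
  have hbound : ∀ ℓ : ℕ, ‖ψi - ψloc ℓ‖ ≤ C₁ * Hm⁻¹ * ((κ - 1) / (κ + 1)) ^ ℓ := by
    intro ℓ
    calc ‖ψi - ψloc ℓ‖ ≤ ((κ - 1) / (κ + 1)) ^ ℓ * ‖ψ0‖ := hcontr ℓ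
    _ ≤ ((κ - 1) / (κ + 1)) ^ ℓ * (C₁ * Hm⁻¹) := by
        exact mul_le_mul_of_nonneg_left hψ0 (pow_nonneg hθpos.le ℓ)
    _ = C₁ * Hm⁻¹ * ((κ - 1) / (κ + 1)) ^ ℓ := by ring
  refine ⟨hbound, hθpos.le, hθlt, -1 / Real.log ((κ - 1) / (κ + 1)), ?_, ?_, ?_⟩
  · have hlog : Real.log ((κ - 1) / (κ + 1)) < 0 := Real.log_neg hθpos hθlt
    rw [show (-1 : ℝ) / Real.log ((κ - 1) / (κ + 1)) = 1 / (-Real.log ((κ - 1) / (κ + 1))) by ring]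
    exact div_pos one_pos (neg_pos.mpr hlog)
  · have hlog : Real.log ((κ - 1) / (κ + 1)) < 0 := Real.log_neg hθpos hθlt
    rw [show -(1 / (-1 / Real.log ((κ - 1) / (κ + 1)))) = Real.log ((κ - 1) / (κ + 1)) by
      field_simp]
    exact (Real.exp_log hθpos).symm
  · intro ℓ
    have hlog : Real.log ((κ - 1) / (κ + 1)) < 0 := Real.log_neg hθpos hθlt
    have h1 : Real.exp (-(ℓ : ℝ) / (-1 / Real.log ((κ - 1) / (κ + 1)))) =
        ((κ - 1) / (κ + 1)) ^ ℓ := by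
      rw [show -(ℓ : ℝ) / (-1 / Real.log ((κ - 1) / (κ + 1))) =
        (ℓ : ℝ) * Real.log ((κ - 1) / (κ + 1)) by field_simp]
      rw [Real.exp_nat_mul, Real.exp_log hθpos]
    rw [h1]; exact hbound ℓ
end
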